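/- arXiv:2006.09922 — 4 statements merged into one kernel-verified Lean document; each statement's English description precedes it below -/
import Mathlib

section
/- For every real k > 4, m(P_{1,k}) = (1/π) ∫_0^π log( (2cosθ + k + √((2cosθ + k)² − 4)) / 2 ) dθ. -/
open Real MeasureTheory Filter

/-- Complete elliptic integral of the first kind. -/
noncomputable def ellK (z : ℝ) : ℝ :=
  ∫ x in (0:ℝ)..1, 1 / Real.sqrt ((1 - x ^ 2) * (1 - z ^ 2 * x ^ 2))

/-- Complete elliptic integral of the third kind. -/
noncomputable def ellPi (n z : ℝ) : ℝ :=
  ∫ x in (0:ℝ)..1, 1 / ((1 - n * x ^ 2) * Real.sqrt ((1 - x ^ 2) * (1 - z ^ 2 * x ^ 2)))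

/-- Mahler measure of `P_{1,k}(x,y) = x + 1/x + y + 1/y + k`. -/
noncomputable def mahlerP1 (k : ℝ) : ℝ :=
  ∫ θ in (0:ℝ)..1, ∫ φ in (0:ℝ)..1,
    Real.log (norm
      (Complex.exp (2 * Real.pi * Complex.I * θ) +
        (Complex.exp (2 * Real.pi * Complex.I * θ))⁻¹ +
       Complex.exp (2 * Real.pi * Complex.I * φ) +
        (Complex.exp (2 * Real.pi * Complex.I * φ))⁻¹ + (k : ℂ)))

/-- Mahler measure of `P̃_k(x,y) = √((k+4)/(k−4))·(x + 1/x) + y − 1/y − k/√(k−4)`. -/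
noncomputable def mahlerPt (k : ℝ) : ℝ :=
  ∫ θ in (0:ℝ)..1, ∫ φ in (0:ℝ)..1,
    Real.log (norm
      ((Real.sqrt ((k + 4) / (k - 4)) : ℂ) *
        (Complex.exp (2 * Real.pi * Complex.I * θ) +
          (Complex.exp (2 * Real.pi * Complex.I * θ))⁻¹) +
       Complex.exp (2 * Real.pi * Complex.I * φ) -
        (Complex.exp (2 * Real.pi * Complex.I * φ))⁻¹ -
       ((k / Real.sqrt (k - 4) : ℝ) : ℂ)))

/-- `B_k(e^{2πiθ}) = √((k+4)/(k−4))·2cos(2πθ) − k/√(k−4)`, real on the unit circle. -/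
noncomputable def Bt (k θ : ℝ) : ℝ :=
  Real.sqrt ((k + 4) / (k - 4)) * (2 * Real.cos (2 * Real.pi * θ)) - k / Real.sqrt (k - 4)

/-- `y₊(e^{2πiθ}) = (−B + √(B² + 4))/2`. -/
noncomputable def yPlus (k θ : ℝ) : ℝ := (-Bt k θ + Real.sqrt ((Bt k θ) ^ 2 + 4)) / 2

/-- `y₋(e^{2πiθ}) = (−B − √(B² + 4))/2`. -/
noncomputable def yMinus (k θ : ℝ) : ℝ := (-Bt k θ - Real.sqrt ((Bt k θ) ^ 2 + 4)) / 2

/-- Half-Mahler measure `m⁺(P̃_k) = ∫₀¹ log⁺|y₊(e^{2πiθ})| dθ`. -/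
noncomputable def mPlus (k : ℝ) : ℝ := ∫ θ in (0:ℝ)..1, max 0 (Real.log |yPlus k θ|)

/-- Half-Mahler measure `m⁻(P̃_k) = ∫₀¹ log⁺|y₋(e^{2πiθ})| dθ`. -/
noncomputable def mMinus (k : ℝ) : ℝ := ∫ θ in (0:ℝ)..1, max 0 (Real.log |yMinus k θ|)


noncomputable def eC (t : ℝ) : ℂ := Complex.exp (2 * Real.pi * Complex.I * t)

lemma eC_eq (t : ℝ) : eC t = Complex.exp (((2 * Real.pi * t : ℝ) : ℂ) * Complex.I) := by
  unfold eC; push_cast; ring_nf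

lemma eC_re (t : ℝ) : (eC t).re = Real.cos (2 * Real.pi * t) := by
  rw [eC_eq, Complex.exp_ofReal_mul_I_re]

lemma eC_im (t : ℝ) : (eC t).im = Real.sin (2 * Real.pi * t) := by
  rw [eC_eq, Complex.exp_ofReal_mul_I_im]

lemma eC_periodic : Function.Periodic eC 1 := by
  intro t
  unfold eC
  push_cast
  rw [mul_add, Complex.exp_add]
  simp [Complex.exp_two_pi_mul_I]

lemma eC_continuous : Continuous eC := by
  unfold eC
  exact Complex.continuous_exp.comp (by continuity)

lemma eC_half (t : ℝ) : eC (t + 1/2) = - eC t := by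
  unfold eC
  push_cast
  rw [mul_add, Complex.exp_add]
  have : 2 * ↑Real.pi * Complex.I * (1/2 : ℂ) = ↑Real.pi * Complex.I := by ring
  rw [this, Complex.exp_pi_mul_I]
  ring

lemma eC_double (t : ℝ) : eC t ^ 2 = eC (2 * t) := by
  unfold eC
  rw [← Complex.exp_nat_mul]
  push_cast
  ring_nf

lemma abs_eC (t : ℝ) : norm (eC t) = 1 := by
  unfold eC
  rw [Complex.norm_exp]
  simp

noncomputable def Ff (w t : ℝ) : ℝ := Real.log (norm (1 + (w : ℂ) * eC t))

noncomputable def Jf (w : ℝ) : ℝ := ∫ t in (0:ℝ)..1, Ff w t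

lemma abs_one_add_pos {w : ℝ} (hw : |w| < 1) (t : ℝ) :
    1 - |w| ≤ norm (1 + (w : ℂ) * eC t) := by
  have h1 : norm ((w : ℂ) * eC t) = |w| := by
    rw [norm_mul, abs_eC, Complex.norm_real, Real.norm_eq_abs, mul_one]
  have h2 := norm_sub_le ((1:ℂ) + (w:ℂ) * eC t) ((w:ℂ) * eC t)
  have h3 : (1:ℂ) + (w:ℂ) * eC t - (w:ℂ) * eC t = 1 := by ring
  rw [h3] at h2
  rw [h1] at h2
  simp only [norm_one] at h2
  linarith

lemma Ff_continuous {w : ℝ} (hw : |w| < 1) : Continuous (Ff w) := by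
  apply Continuous.log
  · exact continuous_norm.comp (continuous_const.add (continuous_const.mul eC_continuous))
  · intro t
    have := abs_one_add_pos hw t
    linarith

lemma Ff_periodic (w : ℝ) : Function.Periodic (Ff w) 1 := by
  intro t; unfold Ff; rw [eC_periodic t]

lemma Jf_intervalIntegrable {w : ℝ} (hw : |w| < 1) (a b : ℝ) :
    IntervalIntegrable (Ff w) volume a b :=
  (Ff_continuous hw).intervalIntegrable a b

lemma Jf_neg {w : ℝ} (hw : |w| < 1) : Jf (-w) = Jf w := by
  have key : ∀ t, Ff (-w) t = Ff w (t + 1/2) := by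
    intro t
    unfold Ff
    rw [eC_half]
    push_cast
    ring_nf
  unfold Jf
  rw [intervalIntegral.integral_congr (g := fun t => Ff w (t + 1/2))
    (fun t _ => key t)]
  rw [intervalIntegral.integral_comp_add_right (f := Ff w) (1/2)]
  have := (Ff_periodic w).intervalIntegral_add_eq (1/2) 0
  norm_num at this ⊢
  rw [this]

lemma Jf_sq {w : ℝ} (hw : |w| < 1) : Jf w = Jf (w ^ 2) / 2 := by
  have hw2 : |w ^ 2| < 1 := by
    rw [abs_pow]
    calc |w| ^ 2 ≤ |w| * 1 := by nlinarith [abs_nonneg w]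
    _ < 1 := by linarith
  have hprod : ∀ t, Ff w t + Ff (-w) t = Ff (-(w^2)) (2 * t) := by
    intro t
    unfold Ff
    have ha : (0:ℝ) < norm (1 + (w:ℂ) * eC t) :=
      lt_of_lt_of_le (by linarith) (abs_one_add_pos hw t)
    have hb : (0:ℝ) < norm (1 + ((-w : ℝ):ℂ) * eC t) :=
      lt_of_lt_of_le (by rw [abs_neg]; linarith [abs_nonneg w])
        (abs_one_add_pos (by rwa [abs_neg]) t)
    rw [← Real.log_mul ha.ne' hb.ne']
    rw [← norm_mul]
    congr 2
    rw [← eC_double]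
    push_cast
    ring
  have h1 : Jf w + Jf (-w) = ∫ t in (0:ℝ)..1, Ff (-(w^2)) (2*t) := by
    unfold Jf
    rw [← intervalIntegral.integral_add (Jf_intervalIntegrable hw 0 1)
      (Jf_intervalIntegrable (by simpa using hw) 0 1)]
    exact intervalIntegral.integral_congr (fun t _ => hprod t)
  have hw2' : |(-(w^2))| < 1 := by simpa using hw2
  have h2 : (∫ t in (0:ℝ)..1, Ff (-(w^2)) (2*t)) = Jf (-(w^2)) := by
    rw [intervalIntegral.integral_comp_mul_left (f := Ff (-(w^2))) (c := 2) two_ne_zero]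
    norm_num
    have hsplit : (∫ t in (0:ℝ)..2, Ff (-(w^2)) t) =
        (∫ t in (0:ℝ)..1, Ff (-(w^2)) t) + ∫ t in (1:ℝ)..2, Ff (-(w^2)) t :=
      (intervalIntegral.integral_add_adjacent_intervals
        (Jf_intervalIntegrable hw2' 0 1) (Jf_intervalIntegrable hw2' 1 2)).symm
    have hper := (Ff_periodic (-(w^2))).intervalIntegral_add_eq 1 0
    norm_num at hper
    rw [hsplit, hper]
    unfold Jf
    ring
  rw [Jf_neg hw] at h1
  rw [h2, Jf_neg hw2] at h1
  linarith

lemma Jf_bound {w : ℝ} (hw : |w| ≤ 1/2) : |Jf w| ≤ Real.log 2 := by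
  have hw1 : |w| < 1 := lt_of_le_of_lt hw (by norm_num)
  have hF : ∀ t ∈ Set.uIoc (0:ℝ) 1, ‖Ff w t‖ ≤ Real.log 2 := by
    intro t _
    have hlo : (1:ℝ)/2 ≤ norm (1 + (w:ℂ) * eC t) :=
      le_trans (by linarith) (abs_one_add_pos hw1 t)
    have hhi : norm (1 + (w:ℂ) * eC t) ≤ 2 := by
      calc norm (1 + (w:ℂ) * eC t)
          ≤ norm (1:ℂ) + norm ((w:ℂ) * eC t) := norm_add_le _ _
        _ = 1 + |w| := by rw [norm_one, norm_mul, abs_eC, Complex.norm_real, Real.norm_eq_abs, mul_one]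
        _ ≤ 2 := by linarith
    rw [Real.norm_eq_abs, Ff, abs_le]
    constructor
    · have : Real.log (1/2) ≤ Real.log (norm (1 + (w:ℂ) * eC t)) :=
        Real.log_le_log (by norm_num) hlo
      rw [Real.log_div one_ne_zero two_ne_zero, Real.log_one] at this
      linarith
    · exact le_trans (Real.log_le_log (by linarith) hhi) le_rfl
  have := intervalIntegral.norm_integral_le_of_norm_le_const hF
  simpa [Jf] using this

lemma Jf_zero_small {w : ℝ} (hw : |w| ≤ 1/2) : Jf w = 0 := by
  have key : ∀ n : ℕ, ∀ u : ℝ, |u| ≤ 1/2 → |Jf u| ≤ Real.log 2 / 2 ^ n := by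
    intro n
    induction n with
    | zero => intro u hu; simpa using Jf_bound hu
    | succ n ih =>
      intro u hu
      have hu1 : |u| < 1 := lt_of_le_of_lt hu (by norm_num)
      have hu2 : |u ^ 2| ≤ 1/2 := by
        rw [abs_pow]
        nlinarith [abs_nonneg u]
      rw [Jf_sq hu1, abs_div]
      have := ih (u^2) hu2
      rw [pow_succ]
      rw [abs_of_nonneg (by norm_num : (0:ℝ) ≤ 2)]
      calc |Jf (u ^ 2)| / 2 ≤ (Real.log 2 / 2 ^ n) / 2 := by linarith
        _ = Real.log 2 / (2 ^ n * 2) := by ring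
  have htend : Tendsto (fun n : ℕ => Real.log 2 / 2 ^ n) atTop (nhds 0) :=
    tendsto_const_nhds.div_atTop (tendsto_pow_atTop_atTop_of_one_lt (by norm_num))
  have hle : |Jf w| ≤ 0 := ge_of_tendsto htend (Eventually.of_forall (fun n => key n w hw))
  have := abs_nonneg (Jf w)
  have : |Jf w| = 0 := le_antisymm hle this
  exact abs_eq_zero.mp this

lemma Jf_zero {w : ℝ} (hw : |w| < 1) : Jf w = 0 := by
  obtain ⟨m, hm⟩ : ∃ m : ℕ, |w| ^ m ≤ 1/2 := by
    have := tendsto_pow_atTop_nhds_zero_of_lt_one (abs_nonneg w) hw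
    have := (this.eventually_le_const (by norm_num : (0:ℝ) < 1/2)).exists
    exact this
  have key : ∀ n : ℕ, ∀ u : ℝ, |u| < 1 → |u| ^ (2 ^ n) ≤ 1/2 → Jf u = 0 := by
    intro n
    induction n with
    | zero => intro u hu h; exact Jf_zero_small (by simpa using h)
    | succ n ih =>
      intro u hu h
      have hu2 : |u ^ 2| < 1 := by
        rw [abs_pow]
        nlinarith [abs_nonneg u]
      have h2 : |u ^ 2| ^ (2 ^ n) ≤ 1/2 := by
        rw [abs_pow, ← pow_mul]
        have : 2 * 2 ^ n = 2 ^ (n + 1) := by ring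
        rw [this]
        exact h
      rw [Jf_sq hu, ih (u^2) hu2 h2, zero_div]
  refine key m w hw ?_
  calc |w| ^ (2 ^ m) ≤ |w| ^ m :=
        pow_le_pow_of_le_one (abs_nonneg w) hw.le (Nat.lt_two_pow_self (n := m)).le
    _ ≤ 1/2 := hm

lemma abs_sq_one_add (w t : ℝ) :
    norm (1 + (w:ℂ) * eC t) ^ 2 = 1 + 2*w*Real.cos (2*Real.pi*t) + w^2 := by
  rw [Complex.sq_norm, Complex.normSq_apply]
  simp only [Complex.add_re, Complex.add_im, Complex.mul_re, Complex.mul_im,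
    Complex.ofReal_re, Complex.ofReal_im, Complex.one_re, Complex.one_im, eC_re, eC_im]
  have := Real.sin_sq_add_cos_sq (2*Real.pi*t)
  nlinarith [this]

lemma inner_int (a : ℝ) (ha : 2 < a) :
    (∫ φ in (0:ℝ)..1, Real.log (a + 2 * Real.cos (2*Real.pi*φ)))
      = Real.log ((a + Real.sqrt (a^2-4))/2) := by
  set s := Real.sqrt (a^2-4) with hs
  have hs2 : s^2 = a^2 - 4 := Real.sq_sqrt (by nlinarith)
  have hs0 : 0 ≤ s := Real.sqrt_nonneg _
  set w := (a - s)/2 with hw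
  have hsa : s < a := by
    nlinarith
  have hw0 : 0 < w := by rw [hw]; linarith
  have hsgt : a - 2 < s := by
    have h1 : a - 2 = Real.sqrt ((a-2)^2) := (Real.sqrt_sq (by linarith)).symm
    rw [h1, hs]
    exact Real.sqrt_lt_sqrt (by positivity) (by nlinarith)
  have hw1 : w < 1 := by rw [hw]; linarith
  have hwabs : |w| < 1 := by rw [abs_of_pos hw0]; exact hw1
  have hwa : w * a = 1 + w^2 := by
    rw [hw]; linear_combination (-(1:ℝ)/4) * hs2
  have hwinv : w * ((a + s)/2) = 1 := by
    rw [hw]; linear_combination (-(1:ℝ)/4) * hs2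
  have key : ∀ φ : ℝ, Real.log (a + 2 * Real.cos (2*Real.pi*φ))
      = 2 * Ff w φ + Real.log ((a + s)/2) := by
    intro φ
    set c := Real.cos (2*Real.pi*φ) with hc
    have hc1 : -1 ≤ c := Real.neg_one_le_cos _
    have habs : norm (1 + (w:ℂ) * eC φ) ^ 2 = w * (a + 2*c) := by
      rw [abs_sq_one_add, ← hc]
      linear_combination (-1 : ℝ) * hwa
    have habspos : 0 < norm (1 + (w:ℂ) * eC φ) :=
      lt_of_lt_of_le (by rw [abs_of_pos hw0]; linarith) (abs_one_add_pos hwabs φ)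
    have hac : 0 < a + 2 * c := by nlinarith
    have h1 : a + 2*c = norm (1 + (w:ℂ) * eC φ) ^ 2 / w := by
      rw [habs]; field_simp
    rw [h1, Real.log_div (by positivity) hw0.ne', Real.log_pow]
    have h2 : Real.log ((a + s)/2) = - Real.log w := by
      rw [← Real.log_inv]
      congr 1
      field_simp at hwinv ⊢
      linarith [hwinv]
    rw [h2, Ff]
    push_cast
    ring
  rw [intervalIntegral.integral_congr (g := fun φ => 2 * Ff w φ + Real.log ((a + s)/2))
    (fun φ _ => key φ)]
  rw [intervalIntegral.integral_add (((Jf_intervalIntegrable hwabs 0 1).const_mul 2))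
    (intervalIntegrable_const)]
  rw [intervalIntegral.integral_const_mul, intervalIntegral.integral_const]
  have := Jf_zero hwabs
  rw [Jf] at this
  rw [this]
  simp

lemma exp_add_inv (x : ℝ) :
    Complex.exp (2 * Real.pi * Complex.I * x) + (Complex.exp (2 * Real.pi * Complex.I * x))⁻¹
      = ((2 * Real.cos (2 * Real.pi * x) : ℝ) : ℂ) := by
  rw [← Complex.exp_neg]
  have h1 : (2 * Real.pi * Complex.I * x : ℂ) = ((2 * Real.pi * x : ℝ) : ℂ) * Complex.I := by
    push_cast; ring
  rw [h1]
  rw [show (-(((2 * Real.pi * x : ℝ) : ℂ) * Complex.I)) =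
    (-((2 * Real.pi * x : ℝ) : ℂ)) * Complex.I from by ring]
  rw [Complex.exp_mul_I, Complex.exp_mul_I]
  rw [Complex.cos_neg, Complex.sin_neg]
  push_cast [← Complex.ofReal_cos]
  ring_nf
  norm_cast

section main
variable (k : ℝ) (hk : 4 < k)

noncomputable def gK (k u : ℝ) : ℝ :=
  Real.log ((2 * Real.cos u + k + Real.sqrt ((2 * Real.cos u + k) ^ 2 - 4)) / 2)

lemma gK_continuous (hk : 4 < k) : Continuous (gK k) := by
  apply Continuous.log
  · fun_prop
  · intro u
    have h1 : -1 ≤ Real.cos u := Real.neg_one_le_cos u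
    have h2 : 0 ≤ Real.sqrt ((2 * Real.cos u + k) ^ 2 - 4) := Real.sqrt_nonneg _
    have : 0 < (2 * Real.cos u + k + Real.sqrt ((2 * Real.cos u + k) ^ 2 - 4)) / 2 := by
      nlinarith
    exact this.ne'

theorem mahlerP1_eq (hk : 4 < k) :
    (∫ θ in (0:ℝ)..1, ∫ φ in (0:ℝ)..1,
      Real.log (norm
        (Complex.exp (2 * Real.pi * Complex.I * θ) +
          (Complex.exp (2 * Real.pi * Complex.I * θ))⁻¹ +
        Complex.exp (2 * Real.pi * Complex.I * φ) +
          (Complex.exp (2 * Real.pi * Complex.I * φ))⁻¹ + (k : ℂ))))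
    = (1 / Real.pi) * ∫ θ in (0:ℝ)..Real.pi,
        Real.log ((2 * Real.cos θ + k +
          Real.sqrt ((2 * Real.cos θ + k) ^ 2 - 4)) / 2) := by
  have hπ : (0:ℝ) < Real.pi := Real.pi_pos
  -- Step 1: identify the double integral with ∫ gK (2πθ)
  have step1 : (∫ θ in (0:ℝ)..1, ∫ φ in (0:ℝ)..1,
      Real.log (norm
        (Complex.exp (2 * Real.pi * Complex.I * θ) +
          (Complex.exp (2 * Real.pi * Complex.I * θ))⁻¹ +
        Complex.exp (2 * Real.pi * Complex.I * φ) +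
          (Complex.exp (2 * Real.pi * Complex.I * φ))⁻¹ + (k : ℂ))))
      = ∫ θ in (0:ℝ)..1, gK k (2 * Real.pi * θ) := by
    apply intervalIntegral.integral_congr
    intro θ _
    beta_reduce
    have ha : 2 < 2 * Real.cos (2 * Real.pi * θ) + k := by
      have := Real.neg_one_le_cos (2 * Real.pi * θ); linarith
    have inner_eq : ∀ φ : ℝ,
        Real.log (norm
          (Complex.exp (2 * Real.pi * Complex.I * θ) +
            (Complex.exp (2 * Real.pi * Complex.I * θ))⁻¹ +
          Complex.exp (2 * Real.pi * Complex.I * φ) +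
            (Complex.exp (2 * Real.pi * Complex.I * φ))⁻¹ + (k : ℂ)))
        = Real.log ((2 * Real.cos (2 * Real.pi * θ) + k) + 2 * Real.cos (2 * Real.pi * φ)) := by
      intro φ
      have hrw : (Complex.exp (2 * Real.pi * Complex.I * θ) +
            (Complex.exp (2 * Real.pi * Complex.I * θ))⁻¹ +
          Complex.exp (2 * Real.pi * Complex.I * φ) +
            (Complex.exp (2 * Real.pi * Complex.I * φ))⁻¹ + (k : ℂ))
          = (((2 * Real.cos (2 * Real.pi * θ) + k) + 2 * Real.cos (2 * Real.pi * φ) : ℝ) : ℂ) := by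
        have h1 := exp_add_inv θ
        have h2 := exp_add_inv φ
        rw [add_assoc (Complex.exp (2 * Real.pi * Complex.I * θ) +
          (Complex.exp (2 * Real.pi * Complex.I * θ))⁻¹)] at *
        push_cast
        rw [show (Complex.exp (2 * ↑Real.pi * Complex.I * ↑θ) +
            (Complex.exp (2 * ↑Real.pi * Complex.I * ↑θ))⁻¹ +
            (Complex.exp (2 * ↑Real.pi * Complex.I * ↑φ) +
            (Complex.exp (2 * ↑Real.pi * Complex.I * ↑φ))⁻¹) + (k:ℂ)) =
            ((Complex.exp (2 * ↑Real.pi * Complex.I * ↑θ) +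
            (Complex.exp (2 * ↑Real.pi * Complex.I * ↑θ))⁻¹) +
            ((Complex.exp (2 * ↑Real.pi * Complex.I * ↑φ) +
            (Complex.exp (2 * ↑Real.pi * Complex.I * ↑φ))⁻¹)) + (k:ℂ)) from by ring]
        rw [h1, h2]
        push_cast
        ring
      rw [hrw, Complex.norm_real, Real.norm_eq_abs]
      congr 1
      have hpos : 0 < (2 * Real.cos (2 * Real.pi * θ) + k) + 2 * Real.cos (2 * Real.pi * φ) := by
        have := Real.neg_one_le_cos (2 * Real.pi * φ); linarith
      exact abs_of_pos hpos
    rw [intervalIntegral.integral_congr (fun φ _ => inner_eq φ)]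
    rw [inner_int _ ha]
    rfl
  rw [step1]
  -- Step 2: substitution u = 2πθ
  have h2π : (2 * Real.pi : ℝ) ≠ 0 := by positivity
  rw [intervalIntegral.integral_comp_mul_left (gK k) h2π]
  norm_num
  -- Step 3: split [0, 2π] and use symmetry
  have hInt : ∀ a b : ℝ, IntervalIntegrable (gK k) volume a b :=
    fun a b => (gK_continuous k hk).intervalIntegrable a b
  have hsplit : (∫ u in (0:ℝ)..(2*Real.pi), gK k u)
      = (∫ u in (0:ℝ)..Real.pi, gK k u) + ∫ u in Real.pi..(2*Real.pi), gK k u :=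
    (intervalIntegral.integral_add_adjacent_intervals (hInt 0 Real.pi)
      (hInt Real.pi (2*Real.pi))).symm
  have hsym : (∫ u in Real.pi..(2*Real.pi), gK k u) = ∫ u in (0:ℝ)..Real.pi, gK k u := by
    have := intervalIntegral.integral_comp_sub_left (a := 0) (b := Real.pi) (gK k) (2*Real.pi)
    rw [show 2*Real.pi - Real.pi = Real.pi from by ring, sub_zero] at this
    rw [← this]
    apply intervalIntegral.integral_congr
    intro x _
    beta_reduce
    unfold gK
    rw [Real.cos_two_pi_sub]
  rw [hsplit, hsym]
  have hA : (∫ θ in (0:ℝ)..Real.pi, Real.log ((2 * Real.cos θ + k +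
      Real.sqrt ((2 * Real.cos θ + k) ^ 2 - 4)) / 2)) = ∫ u in (0:ℝ)..Real.pi, gK k u := rfl
  rw [hA]
  ring
end main

/-- For every real `k > 4`,
`m(P_{1,k}) = (1/π) ∫₀^π log((2cosθ + k + √((2cosθ + k)² − 4))/2) dθ`. -/
theorem mahlerP1_eq_integral (k : ℝ) (hk : 4 < k) :
    mahlerP1 k = (1 / Real.pi) * ∫ θ in (0:ℝ)..Real.pi,
      Real.log ((2 * Real.cos θ + k +
        Real.sqrt ((2 * Real.cos θ + k) ^ 2 - 4)) / 2) := by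
  unfold mahlerP1
  exact mahlerP1_eq k hk
end

section
/- For every real k > 4, Π(−4/k, 4/k) − (1/2)·K(4/k) = kπ/(4(k+4)). -/
open Real MeasureTheory Filter

/-- Comparison integrability: `h x / √((1-x²)(1-z²x²))` is interval integrable on `[0,1]`
when `h` is measurable and bounded by 1. -/
lemma integ_aux (z : ℝ) (hz0 : 0 < z) (hz1 : z < 1) (h : ℝ → ℝ)
    (hm : Measurable h) (hb : ∀ x, |h x| ≤ 1) :
    IntervalIntegrable (fun x => h x / Real.sqrt ((1 - x ^ 2) * (1 - z ^ 2 * x ^ 2)))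
      volume 0 1 := by
  have hz2 : (0:ℝ) < 1 - z ^ 2 := by nlinarith
  set C : ℝ := (Real.sqrt (1 - z ^ 2))⁻¹ with hC
  have hCpos : 0 < C := by positivity
  have hg : IntervalIntegrable (fun x : ℝ => C * (1 - x) ^ (-(1/2) : ℝ)) volume 0 1 := by
    have h1 : IntervalIntegrable (fun x : ℝ => x ^ (-(1/2) : ℝ)) volume 0 1 :=
      intervalIntegral.intervalIntegrable_rpow' (by norm_num)
    have h2 := h1.comp_sub_left 1
    simp only [sub_self, sub_zero] at h2
    exact h2.symm.const_mul C
  refine hg.mono_fun ?_ ?_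
  · have hcm : Continuous fun x : ℝ => (1 - x ^ 2) * (1 - z ^ 2 * x ^ 2) := by continuity
    exact (hm.div (Real.continuous_sqrt.measurable.comp hcm.measurable)).aestronglyMeasurable
  · rw [Filter.EventuallyLE, ae_restrict_iff' measurableSet_uIoc]
    refine Filter.Eventually.of_forall fun x hx => ?_
    rw [Set.uIoc_of_le (by norm_num : (0:ℝ) ≤ 1)] at hx
    obtain ⟨hx0, hx1⟩ := hx
    simp only [Real.norm_eq_abs]
    rcases eq_or_lt_of_le hx1 with rfl | hx1'
    · have e1 : (1:ℝ) - 1 ^ 2 = 0 := by norm_num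
      have e2 : ((1:ℝ) - 1) ^ (-(1/2) : ℝ) = 0 := by
        rw [sub_self]; exact Real.zero_rpow (by norm_num)
      simp [e1, e2]
    · have hx1le : (0:ℝ) < 1 - x := by linarith
      have hS : Real.sqrt ((1 - x) * (1 - z ^ 2)) ≤
          Real.sqrt ((1 - x ^ 2) * (1 - z ^ 2 * x ^ 2)) := by
        apply Real.sqrt_le_sqrt
        have h1 : (1 - x) ≤ 1 - x ^ 2 := by nlinarith
        have h2 : 1 - z ^ 2 ≤ 1 - z ^ 2 * x ^ 2 := by nlinarith
        exact mul_le_mul h1 h2 (by nlinarith) (by nlinarith)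
      have hSpos : (0:ℝ) < Real.sqrt ((1 - x) * (1 - z ^ 2)) := by positivity
      have hS2 : (0:ℝ) < Real.sqrt ((1 - x ^ 2) * (1 - z ^ 2 * x ^ 2)) :=
        lt_of_lt_of_le hSpos hS
      have hRHS : C * (1 - x) ^ (-(1/2) : ℝ) = 1 / Real.sqrt ((1 - x) * (1 - z ^ 2)) := by
        rw [Real.rpow_neg hx1le.le, ← Real.sqrt_eq_rpow, Real.sqrt_mul hx1le.le, hC]
        rw [one_div, mul_inv]
        ring
      rw [abs_of_nonneg (by positivity : (0:ℝ) ≤ C * (1 - x) ^ (-(1/2) : ℝ)), hRHS, abs_div]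
      rw [abs_of_nonneg (Real.sqrt_nonneg _)]
      exact div_le_div₀ (by norm_num) (hb x) hSpos hS

/-- The core identity with `z ∈ (0,1)`:
`Π(−z, z) − K(z)/2 = π/(4(1+z))`, proved via the elementary antiderivative
`x ↦ arcsin((1+z)x/(1+zx²)) / (2(1+z))`. -/
lemma ellPi_sub_ellK_core (z : ℝ) (hz0 : 0 < z) (hz1 : z < 1) :
    ellPi (-z) z - (1 / 2) * ellK z = Real.pi / (4 * (1 + z)) := by
  set S : ℝ → ℝ := fun x => Real.sqrt ((1 - x ^ 2) * (1 - z ^ 2 * x ^ 2)) with hSdef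
  set f : ℝ → ℝ := fun x => ((1 - z * x ^ 2) / (2 * (1 + z * x ^ 2))) / S x with hfdef
  have hd : ∀ x : ℝ, (0:ℝ) < 1 + z * x ^ 2 := fun x => by positivity
  have hcd : Continuous fun x : ℝ => 1 + z * x ^ 2 :=
    continuous_const.add (continuous_const.mul (continuous_pow 2))
  -- integrability of the three integrands
  have hiK : IntervalIntegrable (fun x => 1 / S x) volume 0 1 := by
    apply integ_aux z hz0 hz1 _ measurable_const
    intro x; rw [abs_one]
  have hiPi : IntervalIntegrable (fun x => (1 / (1 + z * x ^ 2)) / S x) volume 0 1 := by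
    have hmPi : Measurable fun x : ℝ => 1 / (1 + z * x ^ 2) :=
      (continuous_const.div hcd fun x => ne_of_gt (hd x)).measurable
    apply integ_aux z hz0 hz1 _ hmPi
    intro x
    rw [abs_of_nonneg (by positivity : (0:ℝ) ≤ 1 / (1 + z * x ^ 2))]
    rw [div_le_one (hd x)]
    nlinarith [hd x, sq_nonneg x]
  have hif : IntervalIntegrable f volume 0 1 := by
    have hmf : Measurable fun x : ℝ => (1 - z * x ^ 2) / (2 * (1 + z * x ^ 2)) :=
      ((continuous_const.sub (continuous_const.mul (continuous_pow 2))).div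
        (continuous_const.mul hcd) fun x => ne_of_gt (mul_pos two_pos (hd x))).measurable
    apply integ_aux z hz0 hz1 _ hmf
    intro x
    rw [abs_div, abs_of_nonneg (by positivity : (0:ℝ) ≤ 2 * (1 + z * x ^ 2))]
    rw [div_le_one (by positivity)]
    have h1 : |1 - z * x ^ 2| ≤ 1 + z * x ^ 2 := by
      rw [abs_le]; constructor <;> nlinarith [sq_nonneg x]
    nlinarith [hd x]
  -- rewrite the LHS as a single integral of f
  have hsplit : ellPi (-z) z - (1 / 2) * ellK z = ∫ x in (0:ℝ)..1, f x := by
    have e1 : ellPi (-z) z = ∫ x in (0:ℝ)..1, (1 / (1 + z * x ^ 2)) / S x := by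
      rw [ellPi]
      apply intervalIntegral.integral_congr
      intro x _
      show 1 / ((1 - -z * x ^ 2) * S x) = 1 / (1 + z * x ^ 2) / S x
      rw [div_div]
      norm_num
    have e2 : (1 / 2) * ellK z = ∫ x in (0:ℝ)..1, (1/2) * (1 / S x) := by
      rw [ellK, intervalIntegral.integral_const_mul]
    rw [e1, e2, ← intervalIntegral.integral_sub hiPi (hiK.const_mul (1/2))]
    apply intervalIntegral.integral_congr
    intro x _
    rcases eq_or_lt_of_le (Real.sqrt_nonneg ((1 - x ^ 2) * (1 - z ^ 2 * x ^ 2))) with hS0 | hS0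
    · show _ - _ = _
      rw [hfdef]
      simp only [hSdef, ← hS0, div_zero, mul_zero, sub_zero]
    · show (1 / (1 + z * x ^ 2)) / S x - (1/2) * (1 / S x) = _
      rw [hfdef]
      have hSne : S x ≠ 0 := ne_of_gt hS0
      field_simp
      ring
  rw [hsplit]
  -- the antiderivative
  set H : ℝ → ℝ := fun x => (1 / (2 * (1 + z))) * Real.arcsin ((1 + z) * x / (1 + z * x ^ 2))
    with hHdef
  have hcont : ContinuousOn H (Set.Icc 0 1) := by
    apply Continuous.continuousOn
    apply Continuous.mul continuous_const
    apply Real.continuous_arcsin.comp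
    exact (continuous_const.mul continuous_id).div hcd (fun x => ne_of_gt (hd x))
  have hderiv : ∀ x ∈ Set.Ioo (0:ℝ) 1, HasDerivWithinAt H (f x) (Set.Ioi x) x := by
    intro x hx
    obtain ⟨hx0, hx1⟩ := hx
    set d : ℝ := 1 + z * x ^ 2 with hddef
    have hdpos : (0:ℝ) < d := hd x
    set w : ℝ := (1 + z) * x / d with hwdef
    have hwpos : 0 < w := by positivity
    have hzx : z * x < 1 := by nlinarith
    have hwlt : w < 1 := by
      rw [hwdef, div_lt_one hdpos, hddef]
      nlinarith [mul_pos (by linarith : (0:ℝ) < 1 - x) (by linarith : (0:ℝ) < 1 - z * x)]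
    have hx2 : x ^ 2 < 1 := by nlinarith
    have hzsq : z ^ 2 < 1 := by nlinarith
    have hPpos : (0:ℝ) < (1 - x ^ 2) * (1 - z ^ 2 * x ^ 2) := by
      have h2 : z ^ 2 * x ^ 2 ≤ z ^ 2 * 1 := by
        exact mul_le_mul_of_nonneg_left hx2.le (sq_nonneg z)
      have := mul_pos (by linarith : (0:ℝ) < 1 - x ^ 2) (by nlinarith : (0:ℝ) < 1 - z ^ 2 * x ^ 2)
      linarith
    have hSpos : (0:ℝ) < S x := Real.sqrt_pos.mpr hPpos
    -- derivative of the inner function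
    have hinner : HasDerivAt (fun y : ℝ => (1 + z) * y / (1 + z * y ^ 2))
        (((1 + z) * (1 + z * x ^ 2) - (1 + z) * x * (z * (2 * x))) / (1 + z * x ^ 2) ^ 2) x := by
      have h1 : HasDerivAt (fun y : ℝ => (1 + z) * y) (1 + z) x := by
        simpa using (hasDerivAt_id x).const_mul (1 + z)
      have h2 : HasDerivAt (fun y : ℝ => 1 + z * y ^ 2) (z * (2 * x)) x := by
        have := ((hasDerivAt_pow 2 x).const_mul z).const_add 1
        simpa using this
      exact h1.div h2 (ne_of_gt hdpos)
    have harcsin : HasDerivAt Real.arcsin (1 / Real.sqrt (1 - w ^ 2)) w :=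
      Real.hasDerivAt_arcsin (ne_of_gt (by linarith : (-1:ℝ) < w)) (ne_of_lt hwlt)
    have hcomp : HasDerivAt (fun y : ℝ => Real.arcsin ((1 + z) * y / (1 + z * y ^ 2)))
        ((1 / Real.sqrt (1 - w ^ 2)) *
          (((1 + z) * (1 + z * x ^ 2) - (1 + z) * x * (z * (2 * x))) / (1 + z * x ^ 2) ^ 2)) x :=
      by have hc := HasDerivAt.comp x harcsin hinner; exact hc
    have hH : HasDerivAt H ((1 / (2 * (1 + z))) * ((1 / Real.sqrt (1 - w ^ 2)) *
        (((1 + z) * (1 + z * x ^ 2) - (1 + z) * x * (z * (2 * x))) / (1 + z * x ^ 2) ^ 2))) x :=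
      hcomp.const_mul _
    -- identify the derivative with f x
    have hsqrt : Real.sqrt (1 - w ^ 2) = S x / d := by
      have h1 : 1 - w ^ 2 = ((1 - x ^ 2) * (1 - z ^ 2 * x ^ 2)) / d ^ 2 := by
        rw [hwdef]
        field_simp
        ring
      rw [h1, Real.sqrt_div hPpos.le, Real.sqrt_sq hdpos.le]
    have heq : (1 / (2 * (1 + z))) * ((1 / Real.sqrt (1 - w ^ 2)) *
        (((1 + z) * (1 + z * x ^ 2) - (1 + z) * x * (z * (2 * x))) / (1 + z * x ^ 2) ^ 2))
        = f x := by
      rw [hsqrt, hfdef]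
      have hz1' : (0:ℝ) < 1 + z := by linarith
      rw [← hddef]
      field_simp
      ring
    rw [heq] at hH
    exact hH.hasDerivWithinAt
  have hftc := intervalIntegral.integral_eq_sub_of_hasDeriv_right_of_le (by norm_num)
    hcont hderiv hif
  rw [hftc, hHdef]
  have h10 : ((1:ℝ) + z) * 1 / (1 + z * 1 ^ 2) = 1 := by
    rw [one_pow, mul_one, mul_one]
    exact div_self (by positivity)
  simp only [h10, Real.arcsin_one, mul_zero, zero_div, Real.arcsin_zero]
  rw [sub_zero, div_mul_div_comm, one_mul]
  congr 1
  ring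

/-- For every real `k > 4`, `Π(−4/k, 4/k) − (1/2)·K(4/k) = kπ/(4(k+4))`. -/
theorem ellPi_sub_ellK (k : ℝ) (hk : 4 < k) :
    ellPi (-4 / k) (4 / k) - (1 / 2) * ellK (4 / k) =
      k * Real.pi / (4 * (k + 4)) := by
  have hk0 : (0:ℝ) < k := by linarith
  have hz0 : (0:ℝ) < 4 / k := by positivity
  have hz1 : 4 / k < 1 := (div_lt_one hk0).mpr hk
  have hneg : (-4 : ℝ) / k = -(4 / k) := by ring
  rw [hneg, ellPi_sub_ellK_core (4 / k) hz0 hz1]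
  rw [eq_div_iff (by positivity : (4:ℝ) * (k + 4) ≠ 0)]
  field_simp
end

section
/- For every real k with 4 < k < 2(1+√5), the half-Mahler measure m⁺(P̃_k) satisfies m⁺(P̃_k) = −(1/π) ∫_{−1}^{k/(2√(k+4))} log( B̃(t) + √(B̃(t)² + 1) ) · dt/√(1−t²), where B̃(t) = (2t√(k+4) − k)/(2√(k−4)). -/
open Real MeasureTheory Filter

/- AUX -/
noncomputable def gA (k t : ℝ) : ℝ :=
  (2 * t * Real.sqrt (k + 4) - k) / (2 * Real.sqrt (k - 4))

noncomputable def gfun (k t : ℝ) : ℝ :=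
  Real.log (gA k t + Real.sqrt ((gA k t) ^ 2 + 1))

lemma aux_abs_lt (b : ℝ) : |b| < Real.sqrt (b ^ 2 + 1) := by
  rw [← Real.sqrt_sq_eq_abs]
  exact Real.sqrt_lt_sqrt (sq_nonneg _) (by linarith)

lemma aux_pos (b : ℝ) : 0 < b + Real.sqrt (b ^ 2 + 1) := by
  have h := aux_abs_lt b
  have := neg_abs_le b
  linarith

lemma gA_cont (k : ℝ) : Continuous (gA k) := by
  unfold gA; fun_prop

lemma gfun_cont (k : ℝ) : Continuous (gfun k) := by
  unfold gfun
  apply Continuous.log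
  · exact ((gA_cont k).add (((gA_cont k).pow 2).add continuous_const).sqrt)
  · intro x
    exact ne_of_gt (aux_pos _)

lemma gfun_nonneg {k t : ℝ} (h : 0 ≤ gA k t) : 0 ≤ gfun k t := by
  apply Real.log_nonneg
  have h2 : Real.sqrt 1 ≤ Real.sqrt ((gA k t) ^ 2 + 1) :=
    Real.sqrt_le_sqrt (by nlinarith)
  nlinarith [Real.sqrt_one]

lemma gfun_nonpos {k t : ℝ} (h : gA k t ≤ 0) : gfun k t ≤ 0 := by
  apply Real.log_nonpos (le_of_lt (aux_pos _))
  have h2 : Real.sqrt ((gA k t) ^ 2 + 1) ≤ Real.sqrt ((1 - gA k t) ^ 2) :=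
    Real.sqrt_le_sqrt (by nlinarith)
  rw [Real.sqrt_sq (by linarith)] at h2
  linarith

lemma gA_half (k θ : ℝ) (hk : 4 < k) :
    gA k (Real.cos (2 * Real.pi * θ)) = Bt k θ / 2 := by
  have hs4 : 0 < Real.sqrt (k - 4) := Real.sqrt_pos.2 (by linarith)
  unfold gA Bt
  rw [Real.sqrt_div (by linarith : (0:ℝ) ≤ k + 4)]
  field_simp

lemma key (k θ : ℝ) (hk : 4 < k) :
    Real.log |yPlus k θ| = -gfun k (Real.cos (2 * Real.pi * θ)) := by
  set B := Bt k θ with hB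
  have hsB : Real.sqrt (B ^ 2 + 4) ^ 2 = B ^ 2 + 4 :=
    Real.sq_sqrt (by positivity)
  have habs : |B| < Real.sqrt (B ^ 2 + 4) := by
    rw [← Real.sqrt_sq_eq_abs]
    exact Real.sqrt_lt_sqrt (sq_nonneg _) (by linarith)
  have hy_pos : 0 < yPlus k θ := by
    have h1 := neg_abs_le B
    have h1' := le_abs_self B
    have : yPlus k θ = (-B + Real.sqrt (B ^ 2 + 4)) / 2 := rfl
    rw [this]; linarith
  have harg : gA k (Real.cos (2 * Real.pi * θ)) +
      Real.sqrt ((gA k (Real.cos (2 * Real.pi * θ))) ^ 2 + 1)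
      = (B + Real.sqrt (B ^ 2 + 4)) / 2 := by
    rw [gA_half k θ hk, ← hB]
    have h2 : (B / 2) ^ 2 + 1 = (Real.sqrt (B ^ 2 + 4) / 2) ^ 2 := by
      rw [div_pow, div_pow, hsB]; ring
    rw [h2, Real.sqrt_sq (by positivity)]
    ring
  have hprod : yPlus k θ * ((B + Real.sqrt (B ^ 2 + 4)) / 2) = 1 := by
    have : yPlus k θ = (-B + Real.sqrt (B ^ 2 + 4)) / 2 := rfl
    rw [this]; nlinarith [hsB]
  have hpos2 : 0 < (B + Real.sqrt (B ^ 2 + 4)) / 2 := by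
    have := neg_abs_le B; linarith
  have h0 : Real.log (yPlus k θ) + Real.log ((B + Real.sqrt (B ^ 2 + 4)) / 2) = 0 := by
    rw [← Real.log_mul (ne_of_gt hy_pos) (ne_of_gt hpos2), hprod, Real.log_one]
  rw [abs_of_pos hy_pos]
  unfold gfun
  rw [harg]
  linarith

/-- For `4 < k < 2(1+√5)`,
`m⁺(P̃_k) = −(1/π) ∫_{−1}^{k/(2√(k+4))} log(B̃(t) + √(B̃(t)² + 1)) dt/√(1−t²)`,
where `B̃(t) = (2t√(k+4) − k)/(2√(k−4))`. -/
theorem mPlus_eq_integral (k : ℝ) (hk : 4 < k) (hk' : k < 2 * (1 + Real.sqrt 5)) :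
    mPlus k = -(1 / Real.pi) *
      ∫ t in (-1:ℝ)..(k / (2 * Real.sqrt (k + 4))),
        Real.log ((2 * t * Real.sqrt (k + 4) - k) / (2 * Real.sqrt (k - 4)) +
          Real.sqrt (((2 * t * Real.sqrt (k + 4) - k) / (2 * Real.sqrt (k - 4))) ^ 2 + 1)) /
        Real.sqrt (1 - t ^ 2) := by
  have hpi : (0:ℝ) < π := Real.pi_pos
  have h2pi : (2:ℝ) * π ≠ 0 := by positivity
  have hs4 : 0 < Real.sqrt (k - 4) := Real.sqrt_pos.2 (by linarith)
  have hs : 0 < Real.sqrt (k + 4) := Real.sqrt_pos.2 (by linarith)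
  have hsq : Real.sqrt (k + 4) ^ 2 = k + 4 := Real.sq_sqrt (by linarith)
  set c : ℝ := k / (2 * Real.sqrt (k + 4)) with hcdef
  have hc0 : 0 < c := div_pos (by linarith) (by positivity)
  have hkc : c * (2 * Real.sqrt (k + 4)) = k := div_mul_cancel₀ _ (by positivity)
  have hc1 : c < 1 := by
    rw [hcdef, div_lt_one (by positivity)]
    have h5 : Real.sqrt 5 ^ 2 = 5 := Real.sq_sqrt (by norm_num)
    nlinarith [Real.sqrt_nonneg 5, hs, hsq, h5]
  -- θc
  set θc : ℝ := Real.arccos c / (2 * π) with hθcdef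
  have hac0 : 0 < Real.arccos c := Real.arccos_pos.2 hc1
  have hacpi : Real.arccos c ≤ π := Real.arccos_le_pi c
  have hθc0 : 0 < θc := div_pos hac0 (by positivity)
  have hθchalf : θc < 1 / 2 := by
    rw [hθcdef, div_lt_iff₀ (by positivity)]
    have := Real.arccos_lt_pi_div_two.2 hc0
    linarith
  have hcos_eq : Real.cos (2 * π * θc) = c := by
    have h2 : 2 * π * θc = Real.arccos c := by
      rw [hθcdef]; field_simp
    rw [h2, Real.cos_arccos (by linarith) hc1.le]
  -- sign lemmas
  have hgA_le : ∀ t : ℝ, t ≤ c → gA k t ≤ 0 := by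
    intro t ht
    unfold gA
    apply div_nonpos_of_nonpos_of_nonneg _ (by positivity)
    nlinarith [hs]
  have hgA_ge : ∀ t : ℝ, c ≤ t → 0 ≤ gA k t := by
    intro t ht
    unfold gA
    apply div_nonneg _ (by positivity)
    nlinarith [hs]
  -- Step 1 : rewrite mPlus
  have e1 : mPlus k = ∫ θ in (0:ℝ)..1, max 0 (-(gfun k (Real.cos (2 * Real.pi * θ)))) := by
    unfold mPlus
    refine intervalIntegral.integral_congr fun θ _ => ?_
    rw [key k θ hk]
  -- integrability
  have hGcont : Continuous fun u : ℝ => gfun k (Real.cos (2 * Real.pi * u)) :=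
    (gfun_cont k).comp (by fun_prop)
  have hHcont : Continuous fun θ : ℝ => max 0 (-(gfun k (Real.cos (2 * Real.pi * θ)))) :=
    continuous_const.max hGcont.neg
  have hii : ∀ a b : ℝ, IntervalIntegrable
      (fun θ : ℝ => max 0 (-(gfun k (Real.cos (2 * Real.pi * θ))))) volume a b :=
    fun a b => hHcont.intervalIntegrable a b
  -- symmetry about 1/2
  have e2 : (∫ θ in (0:ℝ)..1, max 0 (-(gfun k (Real.cos (2 * Real.pi * θ)))))
      = 2 * ∫ θ in (0:ℝ)..(1/2:ℝ), max 0 (-(gfun k (Real.cos (2 * Real.pi * θ)))) := by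
    have hsplit := intervalIntegral.integral_add_adjacent_intervals
      (hii 0 (1/2)) (hii (1/2) 1)
    have hrefl : (∫ θ in (1/2:ℝ)..1, max 0 (-(gfun k (Real.cos (2 * Real.pi * θ)))))
        = ∫ θ in (0:ℝ)..(1/2:ℝ), max 0 (-(gfun k (Real.cos (2 * Real.pi * θ)))) := by
      have h1 : (∫ θ in (1/2:ℝ)..1, max 0 (-(gfun k (Real.cos (2 * Real.pi * θ)))))
          = ∫ θ in (1/2:ℝ)..1, max 0 (-(gfun k (Real.cos (2 * Real.pi * (1 - θ))))) := by
        refine intervalIntegral.integral_congr fun θ _ => ?_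
        rw [show 2 * Real.pi * (1 - θ) = 2 * Real.pi - 2 * Real.pi * θ by ring,
          Real.cos_two_pi_sub]
      rw [h1]
      have h2 := intervalIntegral.integral_comp_sub_left
        (a := (1/2:ℝ)) (b := 1)
        (fun θ : ℝ => max 0 (-(gfun k (Real.cos (2 * Real.pi * θ))))) 1
      norm_num at h2
      rw [h2]
    linarith [hsplit, hrefl]
  -- split at θc
  have e3 : (∫ θ in (0:ℝ)..(1/2:ℝ), max 0 (-(gfun k (Real.cos (2 * Real.pi * θ)))))
      = -∫ θ in θc..(1/2:ℝ), gfun k (Real.cos (2 * Real.pi * θ)) := by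
    have hsplit := intervalIntegral.integral_add_adjacent_intervals
      (hii 0 θc) (hii θc (1/2))
    have hz1 : (∫ θ in (0:ℝ)..θc, max 0 (-(gfun k (Real.cos (2 * Real.pi * θ))))) = 0 := by
      have : (∫ θ in (0:ℝ)..θc, max 0 (-(gfun k (Real.cos (2 * Real.pi * θ)))))
          = ∫ _ in (0:ℝ)..θc, (0:ℝ) := by
        refine intervalIntegral.integral_congr fun θ hθ => ?_
        rw [Set.uIcc_of_le hθc0.le] at hθ
        have hcc : c ≤ Real.cos (2 * Real.pi * θ) := by
          have h3 : 2 * Real.pi * θ ≤ Real.arccos c := by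
            have : θ ≤ θc := hθ.2
            rw [hθcdef] at this
            rw [le_div_iff₀ (by positivity)] at this
            linarith [this]
          have := Real.cos_le_cos_of_nonneg_of_le_pi
            (mul_nonneg (by positivity) hθ.1) hacpi h3
          rwa [Real.cos_arccos (by linarith) hc1.le] at this
        have := gfun_nonneg (hgA_ge _ hcc)
        simp [max_eq_left, neg_nonpos.2 this]
      rw [this]; simp
    have hz2 : (∫ θ in θc..(1/2:ℝ), max 0 (-(gfun k (Real.cos (2 * Real.pi * θ)))))
        = ∫ θ in θc..(1/2:ℝ), -(gfun k (Real.cos (2 * Real.pi * θ))) := by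
      refine intervalIntegral.integral_congr fun θ hθ => ?_
      rw [Set.uIcc_of_le hθchalf.le] at hθ
      have hcc : Real.cos (2 * Real.pi * θ) ≤ c := by
        have h3 : Real.arccos c ≤ 2 * Real.pi * θ := by
          have : θc ≤ θ := hθ.1
          rw [hθcdef] at this
          rw [div_le_iff₀ (by positivity)] at this
          linarith [this]
        have h4 : 2 * Real.pi * θ ≤ π := by
          have : θ ≤ 1/2 := hθ.2
          nlinarith [hpi]
        have := Real.cos_le_cos_of_nonneg_of_le_pi hac0.le h4 h3
        rwa [Real.cos_arccos (by linarith) hc1.le] at this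
      have := gfun_nonpos (hgA_le _ hcc)
      simp [max_eq_right, neg_nonneg.2 this]
    rw [← hsplit, hz1, hz2, intervalIntegral.integral_neg]
    ring
  -- Step 2 : substitution on the RHS
  have e4 : (∫ t in (-1:ℝ)..c, gfun k t / Real.sqrt (1 - t ^ 2))
      = 2 * π * ∫ u in θc..(1/2:ℝ), gfun k (Real.cos (2 * Real.pi * u)) := by
    set f : ℝ → ℝ := fun t => Real.arccos t / (2 * π) with hfdef
    set f' : ℝ → ℝ := fun t => -((1 / Real.sqrt (1 - t ^ 2)) / (2 * π)) with hf'def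
    set G : ℝ → ℝ := fun u => gfun k (Real.cos (2 * Real.pi * u)) with hGdef
    have hfc : ContinuousOn f (Set.uIcc (-1:ℝ) c) :=
      (Real.continuous_arccos.div_const _).continuousOn
    have huIcc : Set.uIcc (-1:ℝ) c = Set.Icc (-1:ℝ) c := Set.uIcc_of_le (by linarith)
    have hmin : min (-1:ℝ) c = -1 := min_eq_left (by linarith)
    have hmax : max (-1:ℝ) c = c := max_eq_right (by linarith)
    have hcontG : Continuous G := hGcont
    -- integrability of f'
    have hp : IntegrableOn (fun t : ℝ => (1 / Real.sqrt (1 - t ^ 2)) / (2 * π))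
        (Set.Ioc (-1:ℝ) c) := by
      apply intervalIntegral.integrableOn_deriv_of_nonneg
        (g := fun t : ℝ => -(Real.arccos t / (2 * π)))
      · exact ((Real.continuous_arccos.div_const _).neg).continuousOn
      · intro x hx
        have h1 : x ≠ -1 := ne_of_gt hx.1
        have h2 : x ≠ 1 := ne_of_lt (lt_trans hx.2 hc1)
        have := ((Real.hasDerivAt_arccos h1 h2).div_const (2 * π)).fun_neg
        rw [show (1 / Real.sqrt (1 - x ^ 2)) / (2 * π) = -(-(1 / Real.sqrt (1 - x ^ 2)) / (2 * π)) by ring]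
        exact this
      · intro x hx; positivity
    have hf'int : IntegrableOn f' (Set.Icc (-1:ℝ) c) := by
      rw [integrableOn_Icc_iff_integrableOn_Ioc]
      exact hp.neg
    have hsub : (∫ t in (-1:ℝ)..c, f' t • (G ∘ f) t) = ∫ u in f (-1)..f c, G u := by
      apply intervalIntegral.integral_comp_smul_deriv''' hfc
      · intro x hx
        rw [hmin, hmax] at hx
        have h1 : x ≠ -1 := ne_of_gt hx.1
        have h2 : x ≠ 1 := ne_of_lt (lt_trans hx.2 hc1)
        have hd := (Real.hasDerivAt_arccos h1 h2).div_const (2 * π)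
        have : f' x = -(1 / Real.sqrt (1 - x ^ 2)) / (2 * π) := by
          rw [hf'def]; rw [neg_div]
        rw [this]
        exact hd.hasDerivWithinAt
      · exact hcontG.continuousOn
      · exact (hcontG.continuousOn).integrableOn_compact
          (isCompact_uIcc.image_of_continuousOn hfc)
      · rw [huIcc]
        simp only [smul_eq_mul]
        exact hf'int.mul_continuousOn
          ((hcontG.comp (Real.continuous_arccos.div_const _)).continuousOn) isCompact_Icc
    have hfm1 : f (-1) = 1 / 2 := by
      rw [hfdef]
      simp only [Real.arccos_neg_one]
      field_simp
    have hfc2 : f c = θc := rfl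
    have hcongr : (∫ t in (-1:ℝ)..c, gfun k t / Real.sqrt (1 - t ^ 2))
        = ∫ t in (-1:ℝ)..c, (-(2 * π)) * (f' t • (G ∘ f) t) := by
      refine intervalIntegral.integral_congr fun t ht => ?_
      rw [huIcc] at ht
      have ht1 : -1 ≤ t := ht.1
      have ht2 : t ≤ 1 := le_trans ht.2 hc1.le
      have harg : 2 * Real.pi * (Real.arccos t / (2 * Real.pi)) = Real.arccos t := by
        field_simp
      simp only [Function.comp_apply, smul_eq_mul, hGdef, hf'def, hfdef]
      rw [harg, Real.cos_arccos ht1 ht2]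
      rcases eq_or_ne (Real.sqrt (1 - t ^ 2)) 0 with h | h
      · simp [h]
      · field_simp
    rw [hcongr, intervalIntegral.integral_const_mul, hsub, hfm1, hfc2,
      intervalIntegral.integral_symm]
    rw [hGdef]
    ring
  -- assemble
  have hgoal : mPlus k = -(1 / π) * ∫ t in (-1:ℝ)..c, gfun k t / Real.sqrt (1 - t ^ 2) := by
    rw [e1, e2, e3, e4]
    field_simp
  exact hgoal
end

section
/- For every real x with 0 < x < 1, with p(x) = −x²/(1+2x) and q(x) = √( x³(2+x)/(1+2x) ), one has Π(p(x), q(x)) − ( (2+x)(1+2x)/(3(1+x)²) )·K(q(x)) = (π/6)·√(1+2x)/(1+x)². -/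
set_option maxHeartbeats 1600000


open Real MeasureTheory Filter

lemma alg_final (r sv c3 C A1 A2 A3 A4 A5 : ℝ)
    (hsv0 : sv ≠ 0) (hA5 : A5 ≠ 0) (hc3 : c3 ≠ 0) (hA3N : A3 + A2^2 ≠ 0)
    (hsv2 : sv^2 = A3)
    (hQ : (A1*A3 - A2*(A4/2))*A5 = c3*(1 - C*A5)*(A3 + A2^2)) :
    r/c3 * (1/(1+(A2/sv)^2) * ((A1*sv - A2*(1/(2*sv)*A4))/sv^2))
      = 1/(A5*(sv/r)) - C*(1/(sv/r)) := by
  rw [← hsv2] at hQ hA3N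
  field_simp
  linear_combination (2*r*hQ)

lemma core_identity (x t : ℝ) (h2x : (0:ℝ) < 1+2*x) (h1x : (0:ℝ) < 1+x) :
    (((1+x+x^2)*(1 - x^3/((1+2*x)*(1+x+x^2))*t^2) + (1+x+x^2)*t*(-(x^3/((1+2*x)*(1+x+x^2))*(2*t))))*((1+2*x)*((1-t^2)*(1 - x^3*(2+x)/(1+2*x)*t^2))) - (1+x+x^2)*t*(1 - x^3/((1+2*x)*(1+x+x^2))*t^2)*(((1+2*x)*(-(2*t)*(1 - x^3*(2+x)/(1+2*x)*t^2) + (1-t^2)*(-(x^3*(2+x)/(1+2*x)*(2*t)))))/2))*(1 - -(x^2)/(1+2*x)*t^2)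
      = 3*(1+x)^2*(1 - (2+x)*(1+2*x)/(3*(1+x)^2)*(1 - -(x^2)/(1+2*x)*t^2))*(((1+2*x)*((1-t^2)*(1 - x^3*(2+x)/(1+2*x)*t^2))) + ((1+x+x^2)*t*(1 - x^3/((1+2*x)*(1+x+x^2))*t^2))^2) := by
  have hu : (0:ℝ) < 1+x+x^2 := by positivity
  have h2' : (1+2*x) ≠ 0 := h2x.ne'
  have h1' : (1+x) ≠ 0 := h1x.ne'
  have hu' : (1+x+x^2) ≠ 0 := hu.ne'
  field_simp
  grind

lemma deriv_eq_aux (x t sv r : ℝ) (hx0 : 0 < x) (hx1 : x < 1)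
    (ht0 : 0 ≤ t) (ht2 : t^2 < 1)
    (hr0 : 0 < r) (hr2 : r^2 = 1+2*x)
    (hsv0 : 0 < sv)
    (hsv2 : sv^2 = ((1+2*x)*((1-t^2)*(1 - x^3*(2+x)/(1+2*x)*t^2)))) :
    r/(3*(1+x)^2) *
      (1/(1+((1+x+x^2)*t*(1 - x^3/((1+2*x)*(1+x+x^2))*t^2)/sv)^2) *
        ((((1+x+x^2)*(1 - x^3/((1+2*x)*(1+x+x^2))*t^2) + (1+x+x^2)*t*(-(x^3/((1+2*x)*(1+x+x^2))*(2*t))))*sv - (1+x+x^2)*t*(1 - x^3/((1+2*x)*(1+x+x^2))*t^2) * (1/(2*sv) * ((1+2*x)*(-(2*t)*(1 - x^3*(2+x)/(1+2*x)*t^2) + (1-t^2)*(-(x^3*(2+x)/(1+2*x)*(2*t))))))) / sv^2))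
    = 1/((1 - -(x^2)/(1+2*x)*t^2) * (sv/r)) - (2+x)*(1+2*x)/(3*(1+x)^2) * (1/(sv/r)) := by
  have h2x : (0:ℝ) < 1+2*x := by linarith
  have h1x : (0:ℝ) < 1+x := by linarith
  have hVpos : 0 < ((1+2*x)*((1-t^2)*(1 - x^3*(2+x)/(1+2*x)*t^2))) := by rw [← hsv2]; positivity
  have hA5 : (0:ℝ) < (1 - -(x^2)/(1+2*x)*t^2) := by
    have h : (0:ℝ) ≤ x^2/(1+2*x)*t^2 := by positivity
    have he : -(x^2)/(1+2*x)*t^2 = -(x^2/(1+2*x)*t^2) := by ring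
    rw [he]; linarith
  have hVN : ((1+2*x)*((1-t^2)*(1 - x^3*(2+x)/(1+2*x)*t^2))) + ((1+x+x^2)*t*(1 - x^3/((1+2*x)*(1+x+x^2))*t^2))^2 ≠ 0 := by positivity
  exact alg_final r sv (3*(1+x)^2) ((2+x)*(1+2*x)/(3*(1+x)^2)) _ _ _ _ _
    hsv0.ne' hA5.ne' (by positivity) hVN hsv2 (core_identity x t h2x h1x)

lemma V_pos (x t : ℝ) (hx0 : 0 < x) (hx1 : x < 1) (ht0 : 0 ≤ t) (ht1 : t < 1) :
    0 < ((1+2*x)*((1-t^2)*(1 - x^3*(2+x)/(1+2*x)*t^2))) := by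
  have h2x : (0:ℝ) < 1+2*x := by linarith
  have ht2 : t^2 < 1 := by nlinarith
  have hs1 : x^3*(2+x)/(1+2*x) < 1 := by
    rw [div_lt_one h2x]
    nlinarith [mul_pos (sub_pos.mpr hx1) (pow_pos (show (0:ℝ) < 1+x by linarith) 3)]
  have hs0 : (0:ℝ) ≤ x^3*(2+x)/(1+2*x) := by positivity
  have hst : x^3*(2+x)/(1+2*x)*t^2 < 1 := by nlinarith
  have hW : 0 < ((1-t^2)*(1 - x^3*(2+x)/(1+2*x)*t^2)) := mul_pos (by linarith) (by linarith)
  exact mul_pos h2x hW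

noncomputable def Fx (x t : ℝ) : ℝ :=
  Real.sqrt (1+2*x)/(3*(1+x)^2) *
    Real.arctan ((1+x+x^2)*t*(1 - x^3/((1+2*x)*(1+x+x^2))*t^2) / Real.sqrt ((1+2*x)*((1-t^2)*(1 - x^3*(2+x)/(1+2*x)*t^2))))

lemma hasDerivAt_Fx (x : ℝ) (hx0 : 0 < x) (hx1 : x < 1) {t : ℝ} (ht0 : 0 ≤ t) (ht1 : t < 1) :
    HasDerivAt (Fx x)
      (1/((1 - -(x^2)/(1+2*x)*t^2) * Real.sqrt ((1-t^2)*(1 - x^3*(2+x)/(1+2*x)*t^2))) - (2+x)*(1+2*x)/(3*(1+x)^2) * (1/Real.sqrt ((1-t^2)*(1 - x^3*(2+x)/(1+2*x)*t^2)))) t := by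
  have h2x : (0:ℝ) < 1+2*x := by linarith
  have ht2 : t^2 < 1 := by nlinarith
  have hV : 0 < ((1+2*x)*((1-t^2)*(1 - x^3*(2+x)/(1+2*x)*t^2))) := V_pos x t hx0 hx1 ht0 ht1
  have hB : HasDerivAt (fun t : ℝ => 1 - x^3/((1+2*x)*(1+x+x^2))*t^2)
      (-(x^3/((1+2*x)*(1+x+x^2))*(2*t))) t := by
    simpa using (((hasDerivAt_pow 2 t).const_mul (x^3/((1+2*x)*(1+x+x^2)))).const_sub 1)
  have hN : HasDerivAt (fun t : ℝ => (1+x+x^2)*t*(1 - x^3/((1+2*x)*(1+x+x^2))*t^2))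
      ((1+x+x^2)*(1 - x^3/((1+2*x)*(1+x+x^2))*t^2) + (1+x+x^2)*t*(-(x^3/((1+2*x)*(1+x+x^2))*(2*t)))) t := by
    have h1 : HasDerivAt (fun t : ℝ => (1+x+x^2)*t) (1+x+x^2) t := by
      simpa using (hasDerivAt_id t).const_mul (1+x+x^2)
    exact h1.mul hB
  have hA : HasDerivAt (fun t : ℝ => 1 - t^2) (-(2*t)) t := by
    simpa using ((hasDerivAt_pow 2 t).const_sub 1)
  have hM : HasDerivAt (fun t : ℝ => 1 - x^3*(2+x)/(1+2*x)*t^2)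
      (-(x^3*(2+x)/(1+2*x)*(2*t))) t := by
    simpa using (((hasDerivAt_pow 2 t).const_mul (x^3*(2+x)/(1+2*x))).const_sub 1)
  have hVd : HasDerivAt (fun t : ℝ => ((1+2*x)*((1-t^2)*(1 - x^3*(2+x)/(1+2*x)*t^2)))) ((1+2*x)*(-(2*t)*(1 - x^3*(2+x)/(1+2*x)*t^2) + (1-t^2)*(-(x^3*(2+x)/(1+2*x)*(2*t))))) t := (hA.mul hM).const_mul (1+2*x)
  have hSV : HasDerivAt (fun t : ℝ => Real.sqrt ((1+2*x)*((1-t^2)*(1 - x^3*(2+x)/(1+2*x)*t^2))))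
      (1/(2*Real.sqrt ((1+2*x)*((1-t^2)*(1 - x^3*(2+x)/(1+2*x)*t^2)))) * ((1+2*x)*(-(2*t)*(1 - x^3*(2+x)/(1+2*x)*t^2) + (1-t^2)*(-(x^3*(2+x)/(1+2*x)*(2*t)))))) t :=
    (Real.hasDerivAt_sqrt hV.ne').comp t hVd
  have hsvpos : 0 < Real.sqrt ((1+2*x)*((1-t^2)*(1 - x^3*(2+x)/(1+2*x)*t^2))) := Real.sqrt_pos.mpr hV
  have hG := hN.div hSV hsvpos.ne'
  have hAT := (Real.hasDerivAt_arctan ((1+x+x^2)*t*(1 - x^3/((1+2*x)*(1+x+x^2))*t^2) / Real.sqrt ((1+2*x)*((1-t^2)*(1 - x^3*(2+x)/(1+2*x)*t^2))))).comp t hG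
  have hF := hAT.const_mul (Real.sqrt (1+2*x)/(3*(1+x)^2))
  have hr0 : 0 < Real.sqrt (1+2*x) := Real.sqrt_pos.mpr h2x
  have hr2 : Real.sqrt (1+2*x)^2 = 1+2*x := Real.sq_sqrt h2x.le
  have hsv2 : Real.sqrt ((1+2*x)*((1-t^2)*(1 - x^3*(2+x)/(1+2*x)*t^2)))^2 = ((1+2*x)*((1-t^2)*(1 - x^3*(2+x)/(1+2*x)*t^2))) := Real.sq_sqrt hV.le
  have hsw : Real.sqrt ((1-t^2)*(1 - x^3*(2+x)/(1+2*x)*t^2)) = Real.sqrt ((1+2*x)*((1-t^2)*(1 - x^3*(2+x)/(1+2*x)*t^2))) / Real.sqrt (1+2*x) := by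
    rw [Real.sqrt_mul h2x.le, mul_div_cancel_left₀ _ hr0.ne']
  rw [hsw]
  have heq := deriv_eq_aux x t (Real.sqrt ((1+2*x)*((1-t^2)*(1 - x^3*(2+x)/(1+2*x)*t^2)))) (Real.sqrt (1+2*x)) hx0 hx1 ht0 ht2 hr0 hr2 hsvpos hsv2
  rw [← heq]
  exact hF

lemma Fx_zero (x : ℝ) : Fx x 0 = 0 := by
  simp [Fx]

lemma Fx_tendsto (x : ℝ) (hx0 : 0 < x) (hx1 : x < 1) :
    Tendsto (Fx x) (nhdsWithin 1 (Set.Ico (0:ℝ) 1))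
      (nhds (Real.sqrt (1+2*x)/(3*(1+x)^2) * (Real.pi/2))) := by
  have h2x : (0:ℝ) < 1+2*x := by linarith
  have hu : (0:ℝ) < 1+x+x^2 := by positivity
  have hNcont : Continuous (fun t : ℝ => (1+x+x^2)*t*(1 - x^3/((1+2*x)*(1+x+x^2))*t^2)) := by continuity
  have hN1pos : 0 < (fun t : ℝ => (1+x+x^2)*t*(1 - x^3/((1+2*x)*(1+x+x^2))*t^2)) 1 := by
    show 0 < (1+x+x^2)*1*(1 - x^3/((1+2*x)*(1+x+x^2))*1^2)
    have hb : x^3/((1+2*x)*(1+x+x^2)) < 1 := by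
      rw [div_lt_one (by positivity)]
      nlinarith
    have : (0:ℝ) < 1 - x^3/((1+2*x)*(1+x+x^2))*1^2 := by rw [one_pow]; linarith
    positivity
  have hNum : Tendsto (fun t : ℝ => (1+x+x^2)*t*(1 - x^3/((1+2*x)*(1+x+x^2))*t^2)) (nhdsWithin 1 (Set.Ico (0:ℝ) 1))
      (nhds ((fun t : ℝ => (1+x+x^2)*t*(1 - x^3/((1+2*x)*(1+x+x^2))*t^2)) 1)) :=
    (hNcont.tendsto 1).mono_left nhdsWithin_le_nhds
  have hVcont : Continuous (fun t : ℝ => Real.sqrt ((1+2*x)*((1-t^2)*(1 - x^3*(2+x)/(1+2*x)*t^2)))) := by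
    apply Real.continuous_sqrt.comp; continuity
  have hV1 : Real.sqrt ((1+2*x)*((1-(1:ℝ)^2)*(1 - x^3*(2+x)/(1+2*x)*(1:ℝ)^2))) = 0 := by
    norm_num
  have hDen : Tendsto (fun t : ℝ => Real.sqrt ((1+2*x)*((1-t^2)*(1 - x^3*(2+x)/(1+2*x)*t^2)))) (nhdsWithin 1 (Set.Ico (0:ℝ) 1))
      (nhdsWithin 0 (Set.Ioi (0:ℝ))) := by
    rw [tendsto_nhdsWithin_iff]
    constructor
    · have := (hVcont.tendsto 1).mono_left
        (nhdsWithin_le_nhds (s := Set.Ico (0:ℝ) 1))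
      rwa [hV1] at this
    · filter_upwards [eventually_mem_nhdsWithin] with t ht
      exact Real.sqrt_pos.mpr (V_pos x t hx0 hx1 ht.1 ht.2)
  have hInv : Tendsto (fun t : ℝ => (Real.sqrt ((1+2*x)*((1-t^2)*(1 - x^3*(2+x)/(1+2*x)*t^2))))⁻¹)
      (nhdsWithin 1 (Set.Ico (0:ℝ) 1)) atTop := hDen.inv_tendsto_nhdsGT_zero
  have hGl : Tendsto (fun t : ℝ => (1+x+x^2)*t*(1 - x^3/((1+2*x)*(1+x+x^2))*t^2) / Real.sqrt ((1+2*x)*((1-t^2)*(1 - x^3*(2+x)/(1+2*x)*t^2))))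
      (nhdsWithin 1 (Set.Ico (0:ℝ) 1)) atTop := by
    have := Filter.Tendsto.pos_mul_atTop hN1pos hNum hInv
    simpa [div_eq_mul_inv] using this
  have hAt : Tendsto (fun t : ℝ => Real.arctan ((1+x+x^2)*t*(1 - x^3/((1+2*x)*(1+x+x^2))*t^2) / Real.sqrt ((1+2*x)*((1-t^2)*(1 - x^3*(2+x)/(1+2*x)*t^2)))))
      (nhdsWithin 1 (Set.Ico (0:ℝ) 1)) (nhds (Real.pi/2)) :=
    (Real.tendsto_arctan_atTop.mono_right nhdsWithin_le_nhds).comp hGl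
  have := hAt.const_mul (Real.sqrt (1+2*x)/(3*(1+x)^2))
  exact this

lemma aux_integrable (s : ℝ) (hs0 : 0 ≤ s) (hs1 : s < 1) (p : ℝ) (hp : p ≤ 0) :
    IntervalIntegrable
      (fun t => 1 / ((1 - p * t ^ 2) * Real.sqrt ((1 - t ^ 2) * (1 - s * t ^ 2))))
      volume 0 1 := by
  have hbase : IntervalIntegrable (fun t : ℝ => t ^ (-(1/2) : ℝ)) volume 0 1 :=
    intervalIntegral.intervalIntegrable_rpow' (by norm_num)
  have hrefl : IntervalIntegrable (fun t : ℝ => (1 - t) ^ (-(1/2) : ℝ)) volume 0 1 := by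
    have := hbase.comp_sub_left 1
    simpa using this.symm
  have hB : IntervalIntegrable
      (fun t : ℝ => (Real.sqrt (1 - s))⁻¹ * (1 - t) ^ (-(1/2) : ℝ)) volume 0 1 :=
    hrefl.const_mul _
  apply hB.mono_fun
  · apply Measurable.aestronglyMeasurable
    fun_prop
  · rw [Filter.EventuallyLE, ae_restrict_iff' measurableSet_uIoc]
    refine Filter.Eventually.of_forall fun t ht => ?_
    rw [Set.uIoc_of_le (by norm_num : (0:ℝ) ≤ 1)] at ht
    obtain ⟨ht0, ht1⟩ := ht
    have h1s : (0:ℝ) < 1 - s := by linarith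
    have hpt : (1:ℝ) ≤ 1 - p * t ^ 2 := by nlinarith [sq_nonneg t]
    rcases eq_or_lt_of_le ht1 with h1 | h1
    · subst h1
      norm_num [Real.zero_rpow]
    · -- t < 1 case
      have hW : Real.sqrt ((1 - t^2)*(1 - s*t^2)) ≥ Real.sqrt (1-s) * Real.sqrt (1-t) := by
        rw [← Real.sqrt_mul h1s.le]
        apply Real.sqrt_le_sqrt
        have h2 : 1 - t ≤ 1 - t^2 := by nlinarith
        have h3 : 1 - s ≤ 1 - s * t^2 := by nlinarith
        nlinarith
      have hWpos : 0 < Real.sqrt (1-s) * Real.sqrt (1-t) := by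
        apply mul_pos <;> [exact Real.sqrt_pos.mpr h1s; exact Real.sqrt_pos.mpr (by linarith)]
      have hfnn : 0 ≤ 1 / ((1 - p * t ^ 2) * Real.sqrt ((1 - t ^ 2) * (1 - s * t ^ 2))) := by
        positivity
      have hRnn : (0:ℝ) ≤ (Real.sqrt (1 - s))⁻¹ * (1 - t) ^ (-(1/2) : ℝ) :=
        mul_nonneg (by positivity) (Real.rpow_nonneg (by linarith) _)
      rw [Real.norm_eq_abs, Real.norm_eq_abs, abs_of_nonneg hfnn, abs_of_nonneg hRnn]
      have hstep : 1 / ((1 - p * t ^ 2) * Real.sqrt ((1 - t ^ 2) * (1 - s * t ^ 2)))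
          ≤ 1 / (Real.sqrt (1-s) * Real.sqrt (1-t)) := by
        apply one_div_le_one_div_of_le hWpos
        calc Real.sqrt (1-s) * Real.sqrt (1-t) ≤ Real.sqrt ((1 - t^2)*(1 - s*t^2)) := hW
        _ ≤ (1 - p*t^2) * Real.sqrt ((1 - t^2)*(1 - s*t^2)) := by
            nlinarith [Real.sqrt_nonneg ((1 - t^2)*(1 - s*t^2))]
      refine hstep.trans (le_of_eq ?_)
      rw [Real.rpow_neg (by linarith : (0:ℝ) ≤ 1 - t), ← Real.sqrt_eq_rpow, one_div, mul_inv]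


theorem elliptic_identity_MS' (x : ℝ) (hx0 : 0 < x) (hx1 : x < 1) :
    (∫ t in (0:ℝ)..1, 1 / ((1 - -x ^ 2 / (1 + 2 * x) * t ^ 2) * Real.sqrt ((1 - t ^ 2) * (1 - x ^ 3 * (2 + x) / (1 + 2 * x) * t ^ 2)))) -
      (2 + x) * (1 + 2 * x) / (3 * (1 + x) ^ 2) * ∫ t in (0:ℝ)..1, 1 / Real.sqrt ((1 - t ^ 2) * (1 - x ^ 3 * (2 + x) / (1 + 2 * x) * t ^ 2)) =
      Real.pi / 6 * Real.sqrt (1 + 2 * x) / (1 + x) ^ 2 := by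
  have h2x : (0:ℝ) < 1 + 2*x := by linarith
  have h1x : (0:ℝ) < 1 + x := by linarith
  have hs0 : (0:ℝ) ≤ x^3*(2+x)/(1+2*x) := by positivity
  have hs1 : x^3*(2+x)/(1+2*x) < 1 := by
    rw [div_lt_one h2x]
    nlinarith [mul_pos (sub_pos.mpr hx1) (pow_pos (show (0:ℝ) < 1+x by linarith) 3)]
  have hpneg : -(x^2)/(1+2*x) ≤ 0 := by
    rw [neg_div]
    exact neg_nonpos.mpr (by positivity)
  have hiP : IntervalIntegrable (fun t => 1 / ((1 - -x ^ 2 / (1 + 2 * x) * t ^ 2) * Real.sqrt ((1 - t ^ 2) * (1 - x ^ 3 * (2 + x) / (1 + 2 * x) * t ^ 2)))) volume 0 1 := by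
    have := aux_integrable (x^3*(2+x)/(1+2*x)) hs0 hs1 (-(x^2)/(1+2*x)) hpneg
    exact this
  have hiK : IntervalIntegrable (fun t => 1 / Real.sqrt ((1 - t ^ 2) * (1 - x ^ 3 * (2 + x) / (1 + 2 * x) * t ^ 2))) volume 0 1 := by
    have := aux_integrable (x^3*(2+x)/(1+2*x)) hs0 hs1 0 le_rfl
    simpa using this
  have hcomb : (∫ t in (0:ℝ)..1, 1 / ((1 - -x ^ 2 / (1 + 2 * x) * t ^ 2) * Real.sqrt ((1 - t ^ 2) * (1 - x ^ 3 * (2 + x) / (1 + 2 * x) * t ^ 2)))) -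
      (2 + x) * (1 + 2 * x) / (3 * (1 + x) ^ 2) * (∫ t in (0:ℝ)..1, 1 / Real.sqrt ((1 - t ^ 2) * (1 - x ^ 3 * (2 + x) / (1 + 2 * x) * t ^ 2)))
      = ∫ t in (0:ℝ)..1, (1 / ((1 - -x ^ 2 / (1 + 2 * x) * t ^ 2) * Real.sqrt ((1 - t ^ 2) * (1 - x ^ 3 * (2 + x) / (1 + 2 * x) * t ^ 2))) - (2 + x) * (1 + 2 * x) / (3 * (1 + x) ^ 2) * (1 / Real.sqrt ((1 - t ^ 2) * (1 - x ^ 3 * (2 + x) / (1 + 2 * x) * t ^ 2)))) := by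
    rw [← intervalIntegral.integral_const_mul,
      ← intervalIntegral.integral_sub hiP (hiK.const_mul _)]
  rw [hcomb]
  -- primitive
  have hgInt : IntervalIntegrable
      (fun t => 1 / ((1 - -x ^ 2 / (1 + 2 * x) * t ^ 2) * Real.sqrt ((1 - t ^ 2) * (1 - x ^ 3 * (2 + x) / (1 + 2 * x) * t ^ 2))) - (2 + x) * (1 + 2 * x) / (3 * (1 + x) ^ 2) * (1 / Real.sqrt ((1 - t ^ 2) * (1 - x ^ 3 * (2 + x) / (1 + 2 * x) * t ^ 2)))) volume 0 1 :=
    hiP.sub (hiK.const_mul _)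
  have hIOn : IntegrableOn
      (fun t => 1 / ((1 - -x ^ 2 / (1 + 2 * x) * t ^ 2) * Real.sqrt ((1 - t ^ 2) * (1 - x ^ 3 * (2 + x) / (1 + 2 * x) * t ^ 2))) - (2 + x) * (1 + 2 * x) / (3 * (1 + x) ^ 2) * (1 / Real.sqrt ((1 - t ^ 2) * (1 - x ^ 3 * (2 + x) / (1 + 2 * x) * t ^ 2))))
      (Set.uIcc (0:ℝ) 1) volume := by
    rw [Set.uIcc_of_le (by norm_num : (0:ℝ) ≤ 1)]
    exact (intervalIntegrable_iff_integrableOn_Icc_of_le (by norm_num)).mp hgInt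
  have hΦc : ContinuousOn
      (fun b => ∫ t in (0:ℝ)..b, (1 / ((1 - -x ^ 2 / (1 + 2 * x) * t ^ 2) * Real.sqrt ((1 - t ^ 2) * (1 - x ^ 3 * (2 + x) / (1 + 2 * x) * t ^ 2))) - (2 + x) * (1 + 2 * x) / (3 * (1 + x) ^ 2) * (1 / Real.sqrt ((1 - t ^ 2) * (1 - x ^ 3 * (2 + x) / (1 + 2 * x) * t ^ 2)))))
      (Set.uIcc (0:ℝ) 1) := intervalIntegral.continuousOn_primitive_interval hIOn
  have hT1 : Tendsto
      (fun b => ∫ t in (0:ℝ)..b, (1 / ((1 - -x ^ 2 / (1 + 2 * x) * t ^ 2) * Real.sqrt ((1 - t ^ 2) * (1 - x ^ 3 * (2 + x) / (1 + 2 * x) * t ^ 2))) - (2 + x) * (1 + 2 * x) / (3 * (1 + x) ^ 2) * (1 / Real.sqrt ((1 - t ^ 2) * (1 - x ^ 3 * (2 + x) / (1 + 2 * x) * t ^ 2)))))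
      (nhdsWithin 1 (Set.Ico (0:ℝ) 1))
      (nhds (∫ t in (0:ℝ)..1, (1 / ((1 - -x ^ 2 / (1 + 2 * x) * t ^ 2) * Real.sqrt ((1 - t ^ 2) * (1 - x ^ 3 * (2 + x) / (1 + 2 * x) * t ^ 2))) - (2 + x) * (1 + 2 * x) / (3 * (1 + x) ^ 2) * (1 / Real.sqrt ((1 - t ^ 2) * (1 - x ^ 3 * (2 + x) / (1 + 2 * x) * t ^ 2)))))) := by
    have h := (hΦc 1 Set.right_mem_uIcc)
    exact h.tendsto.mono_left (nhdsWithin_mono _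
      (by rw [Set.uIcc_of_le (by norm_num : (0:ℝ) ≤ 1)]; exact Set.Ico_subset_Icc_self))
  have hFTC : ∀ b ∈ Set.Ico (0:ℝ) 1,
      (∫ t in (0:ℝ)..b, (1 / ((1 - -x ^ 2 / (1 + 2 * x) * t ^ 2) * Real.sqrt ((1 - t ^ 2) * (1 - x ^ 3 * (2 + x) / (1 + 2 * x) * t ^ 2))) - (2 + x) * (1 + 2 * x) / (3 * (1 + x) ^ 2) * (1 / Real.sqrt ((1 - t ^ 2) * (1 - x ^ 3 * (2 + x) / (1 + 2 * x) * t ^ 2)))))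
        = Fx x b - Fx x 0 := by
    intro b hb
    apply intervalIntegral.integral_eq_sub_of_hasDerivAt
    · intro t ht
      rw [Set.uIcc_of_le hb.1] at ht
      exact hasDerivAt_Fx x hx0 hx1 ht.1 (lt_of_le_of_lt ht.2 hb.2)
    · exact hgInt.mono_set (by
        rw [Set.uIcc_of_le hb.1, Set.uIcc_of_le (by norm_num : (0:ℝ) ≤ 1)]
        exact Set.Icc_subset_Icc le_rfl hb.2.le)
  have hFlim : Tendsto
      (fun b => ∫ t in (0:ℝ)..b, (1 / ((1 - -x ^ 2 / (1 + 2 * x) * t ^ 2) * Real.sqrt ((1 - t ^ 2) * (1 - x ^ 3 * (2 + x) / (1 + 2 * x) * t ^ 2))) - (2 + x) * (1 + 2 * x) / (3 * (1 + x) ^ 2) * (1 / Real.sqrt ((1 - t ^ 2) * (1 - x ^ 3 * (2 + x) / (1 + 2 * x) * t ^ 2)))))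
      (nhdsWithin 1 (Set.Ico (0:ℝ) 1))
      (nhds (Real.pi / 6 * Real.sqrt (1 + 2 * x) / (1 + x) ^ 2)) := by
    have h1 : Tendsto (fun b => Fx x b - Fx x 0) (nhdsWithin 1 (Set.Ico (0:ℝ) 1))
        (nhds (Real.pi / 6 * Real.sqrt (1 + 2 * x) / (1 + x) ^ 2)) := by
      rw [Fx_zero]
      have h2 := Fx_tendsto x hx0 hx1
      have h3 : Real.sqrt (1+2*x)/(3*(1+x)^2) * (Real.pi/2)
          = Real.pi / 6 * Real.sqrt (1 + 2 * x) / (1 + x) ^ 2 := by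
        field_simp
        ring
      rw [h3] at h2
      simpa using h2
    apply h1.congr'
    filter_upwards [eventually_mem_nhdsWithin] with b hb
    exact (hFTC b hb).symm
  have hne : (nhdsWithin (1:ℝ) (Set.Ico (0:ℝ) 1)).NeBot := by
    rw [nhdsWithin_Ico_eq_nhdsLT zero_lt_one]
    infer_instance
  exact tendsto_nhds_unique hT1 hFlim

/-- For `0 < x < 1`, with `p(x) = −x²/(1+2x)` and `q(x) = √(x³(2+x)/(1+2x))`,
`Π(p(x), q(x)) − ((2+x)(1+2x)/(3(1+x)²))·K(q(x)) = (π/6)·√(1+2x)/(1+x)²`. -/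
theorem elliptic_identity_MS (x : ℝ) (hx0 : 0 < x) (hx1 : x < 1) :
    ellPi (-(x ^ 2) / (1 + 2 * x)) (Real.sqrt (x ^ 3 * (2 + x) / (1 + 2 * x))) -
      (2 + x) * (1 + 2 * x) / (3 * (1 + x) ^ 2) *
        ellK (Real.sqrt (x ^ 3 * (2 + x) / (1 + 2 * x))) =
      Real.pi / 6 * Real.sqrt (1 + 2 * x) / (1 + x) ^ 2 := by
  have h2x : (0:ℝ) < 1 + 2*x := by linarith
  have hs0 : (0:ℝ) ≤ x ^ 3 * (2 + x) / (1 + 2 * x) := by positivity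
  have hPi : ellPi (-(x ^ 2) / (1 + 2 * x)) (Real.sqrt (x ^ 3 * (2 + x) / (1 + 2 * x)))
      = ∫ t in (0:ℝ)..1, 1 / ((1 - -x ^ 2 / (1 + 2 * x) * t ^ 2) *
          Real.sqrt ((1 - t ^ 2) * (1 - x ^ 3 * (2 + x) / (1 + 2 * x) * t ^ 2))) := by
    simp only [ellPi, Real.sq_sqrt hs0]
  have hK : ellK (Real.sqrt (x ^ 3 * (2 + x) / (1 + 2 * x)))
      = ∫ t in (0:ℝ)..1, 1 / Real.sqrt ((1 - t ^ 2) * (1 - x ^ 3 * (2 + x) / (1 + 2 * x) * t ^ 2)) := by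
    simp only [ellK, Real.sq_sqrt hs0]
  rw [hPi, hK]
  exact elliptic_identity_MS' x hx0 hx1
end
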